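/- Let V be a finite-dimensional complex inner product space with Hermitian inner product h, linear in the first argument; regard V as a real vector space and let j denote multiplication by i. For a self-adjoint ℂ-linear endomorphism A of V let g_A(v,w) = Re h(Av,w), and for a real subspace X let X^{⊥,g_A} = {v ∈ V : g_A(v,x) = 0 for all x ∈ X}. Let 𝒥 be a unital Jordan operator system on V, i.e. an ℝ-linear subspace of the ℂ-linear endomorphisms of V all of whose members are self-adjoint, containing the identity, and with A ∘ A ∈ 𝒥 whenever A ∈ 𝒥. Let W be a real subspace of V and S := (jW)^{⊥,Re h}. Assume Im h(B s, s') = 0 for every B ∈ 𝒥 and all s, s' ∈ S. Let A ∈ 𝒥 and assume in addition that every q ∈ W ∩ jW with Re h(Aq, q) = 0 lies in ker A. Then W = (W ∩ jW) + ((jW)^{⊥,g_A} ∩ W). -/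

import Mathlib

variable {V : Type*} [NormedAddCommGroup V] [InnerProductSpace ℂ V] [FiniteDimensional ℂ V]

/-- Multiplication by `i` on `V`, seen as an ℝ-linear endomorphism `j`. -/
noncomputable def smulI : V →ₗ[ℝ] V where
  toFun v := Complex.I • v
  map_add' a b := smul_add _ a b
  map_smul' r v := by
    simp only [RingHom.id_apply]
    rw [smul_comm]

/-- A unital Jordan operator system on `V`: an ℝ-linear subspace of the ℂ-linear endomorphisms
of `V` all of whose members are self-adjoint, containing the identity, and closed under
squares. -/
structure IsJordanOperatorSystem (J : Set (V →ₗ[ℂ] V)) : Prop where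
  symm_mem : ∀ A ∈ J, LinearMap.IsSymmetric A
  id_mem : LinearMap.id ∈ J
  sq_mem : ∀ A ∈ J, A ∘ₗ A ∈ J
  add_mem : ∀ A ∈ J, ∀ B ∈ J, A + B ∈ J
  smul_mem : ∀ (r : ℝ), ∀ A ∈ J, r • A ∈ J

/-- The orthogonal complement `X^{⊥, g_B}` of a set of vectors `X` with respect to the real
bilinear form `g_B(v, w) = Re h(B v, w)`; in Mathlib's convention `h (B v) w = inner ℂ w (B v)`.
Note `g_{id} = Re h`. -/
noncomputable def gperp (B : V →ₗ[ℂ] V) (X : Set V) : Submodule ℝ V where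
  carrier := {v | ∀ x ∈ X, (inner ℂ x (B v) : ℂ).re = 0}
  zero_mem' := by intro x hx; simp
  add_mem' := by
    intro a b ha hb x hx
    simp only [map_add, inner_add_right, Complex.add_re, ha x hx, hb x hx, add_zero]
  smul_mem' := by
    intro r v hv x hx
    rw [LinearMap.map_smul_of_tower, ← Complex.coe_smul, inner_smul_right]
    simp [hv x hx]

set_option linter.unusedSectionVars false
set_option maxHeartbeats 1000000

namespace Stmt6Aux

section
attribute [local instance] InnerProductSpace.complexToReal

lemma re_inner_smulI_left (x y : V) : (inner ℂ (Complex.I • x) y : ℂ).re = (inner ℂ x y : ℂ).im := by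
  rw [inner_smul_left]; simp [Complex.mul_re]

lemma mem_gperp {B : V →ₗ[ℂ] V} {X : Set V} {v : V} :
    v ∈ gperp B X ↔ ∀ x ∈ X, (inner ℂ x (B v) : ℂ).re = 0 := Iff.rfl

lemma mem_S_iff (W : Submodule ℝ V) {s : V} :
    s ∈ gperp LinearMap.id ((W.map smulI : Submodule ℝ V) : Set V) ↔
      ∀ w ∈ W, (inner ℂ w s : ℂ).im = 0 := by
  rw [mem_gperp]
  constructor
  · intro h w hw
    have := h (Complex.I • w) ⟨w, hw, rfl⟩
    rwa [LinearMap.id_apply, re_inner_smulI_left] at this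
  · intro h x hx
    obtain ⟨w, hw, rfl⟩ := hx
    show (inner ℂ (Complex.I • w) s : ℂ).re = 0
    rw [re_inner_smulI_left]
    exact h w hw

/-- The largest complex subspace `W ∩ jW` of `W`, as a complex submodule. -/
noncomputable def PcSub (W : Submodule ℝ V) : Submodule ℂ V where
  carrier := ((W ⊓ W.map smulI : Submodule ℝ V) : Set V)
  zero_mem' := (W ⊓ W.map smulI).zero_mem
  add_mem' := fun ha hb => (W ⊓ W.map smulI).add_mem ha hb
  smul_mem' := by
    intro c x hx
    have hx' : x ∈ W ⊓ W.map smulI := hx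
    have hI : Complex.I • x ∈ W ⊓ W.map smulI := by
      obtain ⟨h1, h2⟩ := hx'
      refine ⟨?_, ⟨x, h1, rfl⟩⟩
      obtain ⟨w, hw, rfl⟩ := h2
      show Complex.I • (Complex.I • w) ∈ W
      rw [smul_smul, Complex.I_mul_I, neg_one_smul ℂ w]
      exact W.neg_mem hw
    have hdec : c • x = c.re • x + c.im • (Complex.I • x) := by
      rw [← smul_one_smul ℂ c.re x, ← smul_one_smul ℂ c.im (Complex.I • x), smul_smul,
        ← add_smul]
      congr 1
      simp [Complex.ext_iff]
    show c • x ∈ W ⊓ W.map smulI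
    rw [hdec]
    exact (W ⊓ W.map smulI).add_mem ((W ⊓ W.map smulI).smul_mem _ hx')
      ((W ⊓ W.map smulI).smul_mem _ hI)

lemma mem_PcSub {W : Submodule ℝ V} {x : V} : x ∈ PcSub W ↔ x ∈ W ⊓ W.map smulI := Iff.rfl

lemma pow_mem_J (J : Set (V →ₗ[ℂ] V))
    (sq_mem : ∀ A ∈ J, A ∘ₗ A ∈ J)
    (add_mem : ∀ A ∈ J, ∀ B ∈ J, A + B ∈ J)
    (smul_mem : ∀ (r : ℝ), ∀ A ∈ J, r • A ∈ J)
    (A : V →ₗ[ℂ] V) (hA : A ∈ J) : ∀ m : ℕ, A ^ (m + 1) ∈ J := by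
  have hsq : ∀ B ∈ J, B ^ 2 ∈ J := by
    intro B hB
    have := sq_mem B hB
    rwa [show B ∘ₗ B = B ^ 2 from rfl] at this
  intro m
  induction m using Nat.strong_induction_on with
  | _ m ih =>
    match m, ih with
    | 0, _ => simpa using hA
    | 1, _ => simpa [pow_two] using hsq A hA
    | (n+2), ih =>
      rcases Nat.even_or_odd (n + 3) with ⟨k, hk⟩ | ⟨k, hk⟩
      · have hk1 : 1 ≤ k := by omega
        have hAk : A ^ k ∈ J := by
          have := ih (k-1) (by omega)
          rwa [Nat.sub_add_cancel hk1] at this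
        have : (A ^ k) ^ 2 ∈ J := hsq _ hAk
        rw [← pow_mul] at this
        rwa [show k * 2 = n + 3 by omega] at this
      · have hk1 : 1 ≤ k := by omega
        have hAk : A ^ k ∈ J := by
          have := ih (k-1) (by omega)
          rwa [Nat.sub_add_cancel hk1] at this
        have hAk1 : A ^ (k+1) ∈ J := ih k (by omega)
        have hsum : (A ^ k + A ^ (k+1)) ^ 2 ∈ J := hsq _ (add_mem _ hAk _ hAk1)
        have h1 : A ^ k * A ^ (k+1) = A ^ (2*k+1) := by rw [← pow_add]; congr 1; omega
        have h2 : A ^ (k+1) * A ^ k = A ^ (2*k+1) := by rw [← pow_add]; congr 1; omega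
        have h3 : A ^ k * A ^ k = A ^ (2*k) := by rw [← pow_add]; congr 1; omega
        have h4 : A ^ (k+1) * A ^ (k+1) = A ^ (2*k+2) := by rw [← pow_add]; congr 1; omega
        have hexp : (A ^ k + A ^ (k+1)) ^ 2
            = A ^ (2*k) + ((2:ℝ) • A ^ (2*k+1) + A ^ (2*k+2)) := by
          rw [sq, add_mul, mul_add, mul_add, h1, h2, h3, h4, two_smul]
          abel
        have h2k : A ^ (2*k) ∈ J := by
          have := hsq _ hAk
          rw [← pow_mul] at this
          rwa [show k*2 = 2*k by ring] at this
        have h2k2 : A ^ (2*k+2) ∈ J := by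
          have := hsq _ hAk1
          rw [← pow_mul] at this
          rwa [show (k+1)*2 = 2*k+2 by ring] at this
        have hmem : (A ^ k + A ^ (k+1)) ^ 2 + (-1:ℝ) • A ^ (2*k) + (-1:ℝ) • A ^ (2*k+2) ∈ J :=
          add_mem _ (add_mem _ hsum _ (smul_mem _ _ h2k)) _ (smul_mem _ _ h2k2)
        have heq : (A ^ k + A ^ (k+1)) ^ 2 + (-1:ℝ) • A ^ (2*k) + (-1:ℝ) • A ^ (2*k+2)
            = (2:ℝ) • A ^ (2*k+1) := by
          rw [hexp]; module
        rw [heq] at hmem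
        have h12 := smul_mem ((1:ℝ)/2) _ hmem
        rw [smul_smul] at h12
        norm_num at h12
        rwa [show 2*k+1 = n + 3 by omega] at h12

open RealInnerProductSpace in
lemma symm_surj {E : Type*} [NormedAddCommGroup E] [InnerProductSpace ℝ E]
    [FiniteDimensional ℝ E] (T : E →ₗ[ℝ] E)
    (hT : ∀ u v : E, ⟪T u, v⟫ = ⟪u, T v⟫)
    (x : E) (hx : ∀ k : E, T k = 0 → ⟪x, k⟫ = 0) : ∃ q : E, T q = x := by
  have hle : LinearMap.range T ≤ (LinearMap.ker T)ᗮ := by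
    rintro _ ⟨z, rfl⟩
    intro k hk
    rw [real_inner_comm, hT]
    rw [LinearMap.mem_ker] at hk
    simp [hk]
  have hdim : Module.finrank ℝ (LinearMap.range T) = Module.finrank ℝ ((LinearMap.ker T)ᗮ) := by
    have h1 := LinearMap.finrank_range_add_finrank_ker T
    have h2 := Submodule.finrank_add_finrank_orthogonal (K := LinearMap.ker T)
    omega
  have heq : LinearMap.range T = (LinearMap.ker T)ᗮ :=
    Submodule.eq_of_le_of_finrank_eq hle hdim
  have hxmem : x ∈ (LinearMap.ker T)ᗮ := by
    intro k hk
    rw [real_inner_comm]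
    exact hx k hk
  rw [← heq] at hxmem
  exact hxmem

end
end Stmt6Aux

open Stmt6Aux in
/-- Theorem 4.9 of the paper, operator form: with `S = (jW)^{⊥, Re h}`,
assuming `Im h(B s, s') = 0` for every `B ∈ 𝒥` and all `s, s' ∈ S`, if `A ∈ 𝒥` and every
`q ∈ W ∩ jW` with `Re h(A q, q) = 0` lies in `ker A`, then
`W = (W ∩ jW) + ((jW)^{⊥, g_A} ∩ W)`. -/
theorem stmt6 (J : Set (V →ₗ[ℂ] V)) (hJ : IsJordanOperatorSystem J)
    (W : Submodule ℝ V)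
    (hS : ∀ B ∈ J, ∀ s ∈ gperp LinearMap.id ((W.map smulI : Submodule ℝ V) : Set V),
      ∀ s' ∈ gperp LinearMap.id ((W.map smulI : Submodule ℝ V) : Set V),
        (inner ℂ s' (B s) : ℂ).im = 0)
    (A : V →ₗ[ℂ] V) (hA : A ∈ J)
    (hN : ∀ q ∈ W ⊓ W.map smulI, (inner ℂ q (A q) : ℂ).re = 0 → A q = 0) :
    W = (W ⊓ W.map smulI) ⊔
        (gperp A ((W.map smulI : Submodule ℝ V) : Set V) ⊓ W) := by
  classical
  letI : InnerProductSpace ℝ V := InnerProductSpace.complexToReal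
  set S : Submodule ℝ V := gperp LinearMap.id ((W.map smulI : Submodule ℝ V) : Set V) with hSdef
  -- Every operator of the system maps S into W.
  have hBW : ∀ B ∈ J, ∀ s ∈ S, B s ∈ W := by
    intro B hB s hs
    rw [← Submodule.orthogonal_orthogonal W]
    intro u hu
    show (inner ℂ u (B s) : ℂ).re = 0
    have hs' : -(Complex.I • u) ∈ S := by
      rw [hSdef, mem_S_iff]
      intro w hw
      have hu0 : (inner ℂ w u : ℂ).re = 0 := hu w hw
      rw [inner_neg_right, inner_smul_right]
      simp [Complex.mul_im, hu0]
    have himm := hS B hB s hs _ hs'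
    have hu' : u = Complex.I • (-(Complex.I • u)) := by
      rw [smul_neg, smul_smul, Complex.I_mul_I, neg_one_smul ℂ u, neg_neg]
    rw [hu', re_inner_smulI_left]
    exact himm
  have hsW : S ≤ W := by
    intro s hs
    simpa using hBW LinearMap.id hJ.id_mem s hs
  -- Decomposition of W as (W ⊓ jW) + S.
  have hdec : ∀ v ∈ W, ∃ q ∈ W ⊓ W.map smulI, ∃ s ∈ S, v = q + s := by
    intro v hv
    obtain ⟨y, hy, z, hz, hvyz⟩ := (W.map smulI).exists_add_mem_mem_orthogonal v
    have hzS : z ∈ S := by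
      rw [hSdef, mem_gperp]
      intro x hx
      exact hz x hx
    have hzW : z ∈ W := hsW hzS
    have hyW : y ∈ W := by
      have : y = v - z := by rw [hvyz]; abel
      rw [this]; exact W.sub_mem hv hzW
    exact ⟨y, ⟨hyW, hy⟩, z, hzS, hvyz⟩
  -- The complex orthogonal projection p onto W ⊓ jW.
  set Pc : Submodule ℂ V := PcSub W with hPcdef
  set p : V →ₗ[ℂ] V := Pc.subtype ∘ₗ (Pc.orthogonalProjectionOnto : V →ₗ[ℂ] Pc) with hpdef
  have hpapp : ∀ v : V, p v = ↑(Pc.orthogonalProjectionOnto v) := fun v => rfl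
  have hpP : ∀ v : V, p v ∈ W ⊓ W.map smulI := fun v => (Pc.orthogonalProjectionOnto v).2
  have hpid : ∀ x ∈ W ⊓ W.map smulI, p x = x := by
    intro x hx
    exact Submodule.starProjection_eq_self_iff.mpr hx
  have hpsym : ∀ u v : V, (inner ℂ (p u) v : ℂ) = inner ℂ u (p v) := by
    intro u v
    exact Submodule.inner_starProjection_left_eq_right Pc u v
  have hSperp : ∀ s ∈ S, ∀ q ∈ W ⊓ W.map smulI, (inner ℂ q s : ℂ) = 0 := by
    intro s hs q hq
    have hre : (inner ℂ q s : ℂ).re = 0 := hs q hq.2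
    have him : (inner ℂ q s : ℂ).im = 0 := by
      have hIq : Complex.I • q ∈ W.map smulI := ⟨q, hq.1, rfl⟩
      have := hs (Complex.I • q) hIq
      rwa [LinearMap.id_apply, re_inner_smulI_left] at this
    exact Complex.ext hre him
  have hpS : ∀ s ∈ S, p s = 0 := by
    intro s hs
    have : s ∈ Pcᗮ := by
      intro q hq
      exact hSperp s hs q hq
    rw [hpapp, Submodule.orthogonalProjectionOnto_apply_of_mem_orthogonal this,
      Submodule.coe_zero]
  have hWdec : ∀ v ∈ W, v - p v ∈ S := by
    intro v hv
    obtain ⟨q, hq, s, hsS, rfl⟩ := hdec v hv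
    have : p (q + s) = q := by
      rw [map_add, hpid q hq, hpS s hsS, add_zero]
    rw [this, add_sub_cancel_left]
    exact hsS
  have Asym : ∀ x y : V, (inner ℂ (A x) y : ℂ) = inner ℂ x (A y) := hJ.symm_mem A hA
  -- The compression T of A to W ⊓ jW.
  set T : V →ₗ[ℂ] V := p ∘ₗ A ∘ₗ p with hTdef
  have hTapp : ∀ v : V, T v = p (A (p v)) := fun v => rfl
  have hTsym : ∀ u v : V, (inner ℂ (T u) v : ℂ) = inner ℂ u (T v) := by
    intro u v
    rw [hTapp, hTapp, hpsym, Asym, hpsym]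
  -- All powers of A map S into W.
  have hpow : ∀ m : ℕ, A ^ (m + 1) ∈ J :=
    pow_mem_J J hJ.sq_mem hJ.add_mem hJ.smul_mem A hA
  have hAmS : ∀ m : ℕ, ∀ s ∈ S, (A ^ m) s ∈ W := by
    intro m s hs
    cases m with
    | zero => simpa using hsW hs
    | succ n => exact hBW _ (hpow n) s hs
  -- The T-invariant subspace K.
  set K : Submodule ℝ V := (W ⊓ W.map smulI) ⊓
      (⨅ n : ℕ, W.comap ((A ^ n).restrictScalars ℝ)) with hKdef
  have memK : ∀ v : V, v ∈ K ↔ (v ∈ W ⊓ W.map smulI ∧ ∀ n : ℕ, (A ^ n) v ∈ W) := by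
    intro v
    rw [hKdef]
    simp [Submodule.mem_inf, Submodule.mem_iInf, Submodule.mem_comap]
  have hKT : ∀ v ∈ K, T v ∈ K := by
    intro v hv
    rw [memK] at hv ⊢
    obtain ⟨hvP, hvA⟩ := hv
    have hAv : A v ∈ W := by simpa using hvA 1
    have hAvS : A v - p (A v) ∈ S := hWdec _ hAv
    constructor
    · rw [hTapp, hpid v hvP]
      exact hpP _
    · intro n
      rw [hTapp, hpid v hvP]
      have hsplit : p (A v) = A v - (A v - p (A v)) := by abel
      rw [hsplit, map_sub]
      apply W.sub_mem
      · have : (A ^ n) (A v) = (A ^ (n+1)) v := by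
          rw [pow_succ, Module.End.mul_apply]
        rw [this]
        exact hvA (n+1)
      · exact hAmS n _ hAvS
  -- Main step: for every s ∈ S there is q ∈ K with T q = p (A s).
  have main : ∀ s ∈ S, ∃ q ∈ K, A s - A q ∈ S := by
    intro s hs
    have hAsW : A s ∈ W := hBW A hA s hs
    set x : V := p (A s) with hxdef
    have hxK : x ∈ K := by
      rw [memK]
      refine ⟨hpP _, ?_⟩
      intro n
      have hsplit : x = A s - (A s - p (A s)) := by rw [hxdef]; abel
      rw [hsplit, map_sub]
      apply W.sub_mem
      · have : (A ^ n) (A s) = (A ^ (n+1)) s := by rw [pow_succ, Module.End.mul_apply]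
        rw [this]
        exact hAmS (n+1) s hs
      · exact hAmS n _ (hWdec _ hAsW)
    -- restrict T to K
    have hKT' : ∀ v ∈ K, (T.restrictScalars ℝ) v ∈ K := hKT
    set Tr : K →ₗ[ℝ] K := (T.restrictScalars ℝ).restrict hKT' with hTrdef
    have hTrapp : ∀ k : K, ((Tr k : V)) = T (k : V) := fun k => rfl
    have hTrsym : ∀ u v : K,
        (inner ℝ (Tr u) v : ℝ) = (inner ℝ u (Tr v) : ℝ) := by
      intro u v
      show (inner ℂ ((Tr u : V)) ((v : V)) : ℂ).re = (inner ℂ ((u : V)) ((Tr v : V)) : ℂ).re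
      rw [hTrapp, hTrapp, hTsym]
    have hker : ∀ k : K, Tr k = 0 → (inner ℝ (⟨x, hxK⟩ : K) k : ℝ) = 0 := by
      intro k hk
      have hTk : T (k : V) = 0 := by
        have := congrArg (Subtype.val) hk
        rwa [hTrapp] at this
      have hkP : (k : V) ∈ W ⊓ W.map smulI := ((memK _).mp k.2).1
      have hAk : A (k : V) = 0 := by
        apply hN _ hkP
        have h1 : (inner ℂ (k : V) (A (k : V)) : ℂ) = inner ℂ (k : V) (T (k : V)) := by
          rw [hTapp, hpid _ hkP, ← hpsym, hpid _ hkP]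
        rw [h1, hTk, inner_zero_right]
        simp
      show (inner ℂ x ((k : V)) : ℂ).re = 0
      have hx0 : (inner ℂ x ((k : V)) : ℂ) = 0 := by
        rw [hxdef, hpsym, hpid _ hkP, Asym, hAk, inner_zero_right]
      rw [hx0]; simp
    obtain ⟨q, hq⟩ := symm_surj Tr hTrsym ⟨x, hxK⟩ hker
    refine ⟨(q : V), q.2, ?_⟩
    have hTq : T (q : V) = x := by
      have := congrArg (Subtype.val) hq
      rwa [hTrapp] at this
    have hqP : (q : V) ∈ W ⊓ W.map smulI := ((memK _).mp q.2).1
    have hAqW : A (q : V) ∈ W := by simpa using ((memK _).mp q.2).2 1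
    have hpAq : p (A (q : V)) = p (A s) := by
      have : p (A (q : V)) = T (q : V) := by rw [hTapp, hpid _ hqP]
      rw [this, hTq, hxdef]
    have heq : A s - A (q : V)
        = (A s - p (A s)) - (A (q : V) - p (A (q : V))) := by
      rw [hpAq]; abel
    rw [heq]
    exact S.sub_mem (hWdec _ hAsW) (hWdec _ hAqW)
  -- Conclusion.
  apply le_antisymm
  · intro v hv
    obtain ⟨qP, hqP, s, hsS, rfl⟩ := hdec v hv
    obtain ⟨qv, hqvK, hAS⟩ := main s hsS
    have hqvP : qv ∈ W ⊓ W.map smulI := ((memK _).mp hqvK).1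
    apply Submodule.mem_sup.mpr
    refine ⟨qP + qv, (W ⊓ W.map smulI).add_mem hqP hqvP, s - qv, ?_, by abel⟩
    refine Submodule.mem_inf.mpr ⟨?_, W.sub_mem (hsW hsS) hqvP.1⟩
    rw [mem_gperp]
    intro y hy
    rw [map_sub]
    exact hAS y hy
  · apply sup_le inf_le_left inf_le_right
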